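/- Let A be a commutative pointed monoid with unit group A^× and maximal ideal m = A ∖ A^×. Suppose (i) m is finitely generated as an ideal (there is a finite Y ⊆ m such that every element of m is of the form a·y, a ∈ A, y ∈ Y), (ii) mⁿ = m^{n+1} for some n > 0, where m^k denotes the set of products of k elements of m, and (iii) mⁿ is finitely generated as an A/m-set, i.e. there is a finite F ⊆ mⁿ such that every element of mⁿ is either 0 or of the form u·f with u ∈ A^×, f ∈ F. Then A is artinian: every descending chain of ideals of A stabilizes. -/

import Mathlib

open Pointwise

/-- An ideal of a commutative pointed monoid `A`. -/
def IsMIdeal {A : Type*} [CommMonoidWithZero A] (I : Set A) : Prop :=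
  (0 : A) ∈ I ∧ ∀ a x : A, x ∈ I → a * x ∈ I

/-- The `k`-th power of a subset `I` of a commutative pointed monoid:
the set of all products of `k` elements of `I`. -/
def setPowM {A : Type*} [CommMonoidWithZero A] (I : Set A) (k : ℕ) : Set A :=
  {x : A | ∃ l : List A, l.length = k ∧ (∀ a ∈ l, a ∈ I) ∧ l.prod = x}

/-- Let `A` be a commutative pointed monoid with maximal ideal `m = A ∖ A^×`.  If
(i) `m` is finitely generated as an ideal, (ii) `mⁿ = m^(n+1)` for some `n > 0`, and
(iii) `mⁿ` is finitely generated as an `A/m`-set, then `A` is artinian: every descending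
chain of ideals of `A` stabilizes. -/
theorem artinian_of_maximal_ideal_conditions
    {A : Type*} [CommMonoidWithZero A]
    (m : Set A) (hm : m = {a : A | ¬ IsUnit a})
    (hfg : ∃ Y : Finset A, (Y : Set A) ⊆ m ∧ ∀ x ∈ m, ∃ a : A, ∃ y ∈ Y, x = a * y)
    (n : ℕ) (hn : 0 < n)
    (hstab : setPowM m n = setPowM m (n + 1))
    (hfgset : ∃ F : Finset A, (F : Set A) ⊆ setPowM m n ∧
      ∀ x ∈ setPowM m n, x = 0 ∨ ∃ u : Aˣ, ∃ f ∈ F, x = (u : A) * f) :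
    ∀ c : ℕ → Set A, (∀ k, IsMIdeal (c k)) → (∀ k, c (k + 1) ⊆ c k) →
      ∃ N, ∀ j, N ≤ j → c j = c N := by
  intro c hideal hdesc
  obtain ⟨Y, hY, hYgen⟩ := hfg
  obtain ⟨F, hF, hFgen⟩ := hfgset
  -- m is closed under multiplication by arbitrary elements
  have hmul : ∀ a x : A, x ∈ m → a * x ∈ m := by
    subst hm
    intro a x hx hax
    exact hx (isUnit_of_mul_isUnit_right hax)
  -- setPowM m n is closed under multiplication by arbitrary elements
  have hpow_mul : ∀ a x : A, x ∈ setPowM m n → a * x ∈ setPowM m n := by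
    intro a x hx
    obtain ⟨l, hlen, hmem, hprod⟩ := hx
    cases l with
    | nil => simp at hlen; omega
    | cons z t =>
        refine ⟨(a * z) :: t, by simpa using hlen, ?_, ?_⟩
        · intro b hb
          rcases List.mem_cons.mp hb with h | h
          · subst h; exact hmul a z (hmem z List.mem_cons_self)
          · exact hmem b (List.mem_cons_of_mem _ h)
        · simp only [List.prod_cons] at hprod ⊢
          rw [mul_assoc, hprod]
  -- every element of m is (unit)·(product of ≤ k elements of Y) or
  -- (elt)·(product of exactly k elements of Y)
  have P : ∀ k : ℕ, 1 ≤ k → ∀ x ∈ m,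
      (∃ u : Aˣ, ∃ l : List A, l.length ≤ k ∧ (∀ a ∈ l, a ∈ (Y : Set A)) ∧ x = u * l.prod) ∨
      (∃ a : A, ∃ l : List A, l.length = k ∧ (∀ a ∈ l, a ∈ (Y : Set A)) ∧ x = a * l.prod) := by
    intro k hk
    induction k, hk using Nat.le_induction with
    | base =>
        intro x hx
        obtain ⟨a, y, hy, hxy⟩ := hYgen x hx
        exact Or.inr ⟨a, [y], rfl, by simpa using hy, by simpa using hxy⟩
    | succ k hk ih =>
        intro x hx
        rcases ih x hx with ⟨u, l, hl, hmem, hprod⟩ | ⟨a, l, hl, hmem, hprod⟩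
        · exact Or.inl ⟨u, l, le_trans hl (Nat.le_succ k), hmem, hprod⟩
        · by_cases ha : IsUnit a
          · exact Or.inl ⟨ha.unit, l, hl ▸ Nat.le_succ k, hmem, by rw [hprod, ha.unit_spec]⟩
          · have ham : a ∈ m := by rw [hm]; exact ha
            obtain ⟨b, y, hy, hab⟩ := hYgen a ham
            refine Or.inr ⟨b, y :: l, by simp [hl], ?_, ?_⟩
            · intro z hz
              rcases List.mem_cons.mp hz with h | h
              · subst h; exact hy
              · exact hmem z h
            · rw [hprod, hab, List.prod_cons, mul_assoc]
  -- finiteness of sets of short products of elements of Y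
  have Tfin : ∀ k : ℕ,
      {x : A | ∃ l : List A, l.length ≤ k ∧ (∀ a ∈ l, a ∈ (Y : Set A)) ∧ l.prod = x}.Finite := by
    intro k
    induction k with
    | zero =>
        apply Set.Finite.subset (Set.finite_singleton (1 : A))
        rintro x ⟨l, hl, -, hp⟩
        have : l = [] := List.length_eq_zero_iff.mp (Nat.le_zero.mp hl)
        subst this
        simp_all
    | succ k ih =>
        apply Set.Finite.subset (ih.union ((Y.finite_toSet.mul ih)))
        rintro x ⟨l, hl, hmem, hp⟩
        cases l with
        | nil => exact Or.inl ⟨[], by simp, by simp, hp⟩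
        | cons y t =>
            refine Or.inr ?_
            have hy : y ∈ (Y : Set A) := hmem y List.mem_cons_self
            have ht : t.prod ∈ {x : A | ∃ l : List A, l.length ≤ k ∧
                (∀ a ∈ l, a ∈ (Y : Set A)) ∧ l.prod = x} :=
              ⟨t, by simpa using hl, fun a ha => hmem a (List.mem_cons_of_mem _ ha), rfl⟩
            have := Set.mul_mem_mul hy ht
            rwa [show y * t.prod = x by rw [← hp, List.prod_cons]] at this
  -- the finite set of representatives
  set T : Set A := {x : A | ∃ l : List A, l.length ≤ n ∧ (∀ a ∈ l, a ∈ (Y : Set A)) ∧ l.prod = x}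
    with hT
  set S : Set A := T ∪ (F : Set A) ∪ {0} with hS
  have hSfin : S.Finite := ((Tfin n).union F.finite_toSet).union (Set.finite_singleton 0)
  -- every element of A is a unit multiple of an element of S
  have rep : ∀ x : A, ∃ u : Aˣ, ∃ s ∈ S, x = (u : A) * s := by
    intro x
    by_cases hx : IsUnit x
    · refine ⟨hx.unit, 1, Or.inl (Or.inl ⟨[], by simp [hn.le], by simp, by simp⟩), ?_⟩
      rw [mul_one, hx.unit_spec]
    · have hxm : x ∈ m := by rw [hm]; exact hx
      rcases P n hn x hxm with ⟨u, l, hl, hmem, hprod⟩ | ⟨a, l, hl, hmem, hprod⟩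
      · exact ⟨u, l.prod, Or.inl (Or.inl ⟨l, hl, hmem, rfl⟩), hprod⟩
      · have hlp : l.prod ∈ setPowM m n :=
          ⟨l, hl, fun b hb => hY (hmem b hb), rfl⟩
        have hxp : x ∈ setPowM m n := hprod ▸ hpow_mul a l.prod hlp
        rcases hFgen x hxp with h0 | ⟨u, f, hf, hxf⟩
        · exact ⟨1, 0, Or.inr rfl, by simp [h0]⟩
        · exact ⟨u, f, Or.inl (Or.inr hf), hxf⟩
  -- the chain is transitively descending
  have chain_trans : ∀ i j : ℕ, i ≤ j → c j ⊆ c i := by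
    intro i j h
    induction h with
    | refl => exact subset_rfl
    | step h ih => exact fun x hx => (ih (hdesc _ hx) : _)
  -- an ideal is determined by its intersection with S
  have determined : ∀ i j : ℕ, c i ∩ S = c j ∩ S → c i ⊆ c j := by
    intro i j hij x hx
    obtain ⟨u, s, hs, hxs⟩ := rep x
    have hsci : s ∈ c i := by
      have := (hideal i).2 ((u⁻¹ : Aˣ) : A) x hx
      rwa [hxs, ← mul_assoc, Units.inv_mul, one_mul] at this
    have : s ∈ c j ∩ S := hij ▸ ⟨hsci, hs⟩
    have := (hideal j).2 (u : A) s this.1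
    rwa [← hxs] at this
  -- the intersections with S form a descending chain of subsets of a finite set
  have dfin : ∀ k, (c k ∩ S).Finite := fun k => hSfin.subset Set.inter_subset_right
  obtain ⟨t, ⟨N, hNt⟩, hmin⟩ := Nat.lt_wfRel.wf.has_min
    (Set.range fun k => (c k ∩ S).ncard) ⟨_, 0, rfl⟩
  refine ⟨N, fun j hj => ?_⟩
  have hsub : c j ∩ S ⊆ c N ∩ S :=
    Set.inter_subset_inter_left S (chain_trans N j hj)
  have hcard : (c N ∩ S).ncard ≤ (c j ∩ S).ncard := by
    have h1 : ¬ (c j ∩ S).ncard < t := hmin _ ⟨j, rfl⟩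
    have h2 : (c N ∩ S).ncard = t := hNt
    omega
  have heq : c j ∩ S = c N ∩ S := Set.eq_of_subset_of_ncard_le hsub hcard (dfin N)
  exact Set.Subset.antisymm (determined j N heq) (determined N j heq.symm)
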